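/- Any infinite concept class H has either an infinite star-eluder sequence or infinite Littlestone dimension. -/

import Mathlib

/-- `nIdx k = k(k-1)/2`, so that `nIdx (k+1) - nIdx k = k`. -/
def nIdx (k : ℕ) : ℕ := k * (k - 1) / 2

namespace StarEluderAux

open Filter

/-- History of a recursively chosen sequence: `hist next n = [a 0, ..., a (n-1)]` where
`a j = next [a 0, ..., a (j-1)]`. -/
noncomputable def hist {α : Type*} (next : List α → α) : ℕ → List α
  | 0 => []
  | n + 1 => hist next n ++ [next (hist next n)]

/-- The recursively chosen sequence itself. -/
noncomputable def seqRec {α : Type*} (next : List α → α) (n : ℕ) : α :=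
  next (hist next n)

theorem hist_eq {α : Type*} (next : List α → α) (n : ℕ) :
    hist next n = (List.range n).map (seqRec next) := by
  induction n with
  | zero => rfl
  | succ n ih => rw [hist, List.range_succ, List.map_append, ih]; simp [seqRec, ih]

theorem mem_hist {α : Type*} (next : List α → α) {n : ℕ} {a : α} :
    a ∈ hist next n ↔ ∃ m < n, seqRec next m = a := by
  rw [hist_eq]; simp

theorem seqRec_mem_hist {α : Type*} (next : List α → α) {m n : ℕ} (h : m < n) :
    seqRec next m ∈ hist next n :=
  (mem_hist next).2 ⟨m, h, rfl⟩

variable {X : Type*}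

/-- A pair of Booleans that are unequal: the first is the negation of the second. -/
theorem bool_ne_iff {a b : Bool} (h : a ≠ b) : a = !b := by
  cases a <;> cases b <;> simp_all

/-- Step 1: The greedy construction.  Using an ultrafilter limit `h` of the infinite class `H`,
produce `G j ∈ H` and points `z j` such that `G j` agrees with `h` on all earlier points
`z l` (`l < j`) but disagrees at `z j`. -/
theorem greedy {H : Set (X → Bool)} (hH : H.Infinite) :
    ∃ (h : X → Bool) (G : ℕ → X → Bool) (z : ℕ → X),
      (∀ j, G j ∈ H) ∧ (∀ j l, l < j → G j (z l) = h (z l)) ∧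
      (∀ j, G j (z j) ≠ h (z j)) := by
  classical
  haveI : Infinite ↥H := hH.to_subtype
  set U : Ultrafilter ↥H := hyperfilter ↥H with hUdef
  set h : X → Bool := fun x =>
    if {g : ↥H | (g : X → Bool) x = true} ∈ U then true else false with hh
  have hagree : ∀ x : X, {g : ↥H | (g : X → Bool) x = h x} ∈ U := by
    intro x
    by_cases hx : {g : ↥H | (g : X → Bool) x = true} ∈ U
    · have h1 : h x = true := by simp [hh, hx]
      rw [h1]; exact hx
    · have h1 : h x = false := by simp [hh, hx]
      rw [h1]
      have h2 := (Ultrafilter.compl_mem_iff_notMem (f := U)).2 hx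
      refine mem_of_superset h2 ?_
      intro g hg
      simp only [Set.mem_compl_iff, Set.mem_setOf_eq] at hg ⊢
      simpa using hg
  have step : ∀ L : List X, ∃ p : ↥H × X,
      (∀ w ∈ L, (p.1 : X → Bool) w = h w) ∧ (p.1 : X → Bool) p.2 ≠ h p.2 := by
    intro L
    have hmem : {g : ↥H | ∀ w ∈ L, (g : X → Bool) w = h w} ∈ U := by
      induction L with
      | nil =>
        refine mem_of_superset Filter.univ_mem ?_
        intro g _
        simp
      | cons a L ih =>
        have h3 := inter_mem (hagree a) ih
        refine mem_of_superset h3 ?_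
        intro g hg w hw
        rcases List.mem_cons.1 hw with rfl | hw
        · exact hg.1
        · exact hg.2 w hw
    have hinf : {g : ↥H | ∀ w ∈ L, (g : X → Bool) w = h w}.Infinite := by
      by_contra hfin
      rw [Set.not_infinite] at hfin
      exact hfin.notMem_hyperfilter hmem
    have hex : ∃ g ∈ {g : ↥H | ∀ w ∈ L, (g : X → Bool) w = h w}, (g : X → Bool) ≠ h := by
      by_contra hc
      push_neg at hc
      have hsub : {g : ↥H | ∀ w ∈ L, (g : X → Bool) w = h w}.Subsingleton := by
        intro g hg g' hg'
        exact Subtype.ext ((hc g hg).trans (hc g' hg').symm)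
      exact hinf hsub.finite
    obtain ⟨g, hgS, hgne⟩ := hex
    obtain ⟨zz, hzz⟩ := Function.ne_iff.1 hgne
    exact ⟨(g, zz), fun w hw => hgS w hw, hzz⟩
  let next : List (↥H × X) → ↥H × X := fun L => Classical.choose (step (L.map Prod.snd))
  let sq : ℕ → ↥H × X := seqRec next
  refine ⟨h, fun j => ((sq j).1 : X → Bool), fun j => (sq j).2, fun j => (sq j).1.2, ?_, ?_⟩
  · intro j l hlj
    have hspec := Classical.choose_spec (step ((hist next j).map Prod.snd))
    have hmem : (sq l).2 ∈ (hist next j).map Prod.snd :=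
      List.mem_map.2 ⟨sq l, seqRec_mem_hist next hlj, rfl⟩
    exact hspec.1 _ hmem
  · intro j
    have hspec := Classical.choose_spec (step ((hist next j).map Prod.snd))
    exact hspec.2

/-- Extract a strictly monotone subsequence into an infinite set of naturals. -/
theorem mono_into {S : Set ℕ} (hS : S.Infinite) :
    ∃ ρ : ℕ → ℕ, StrictMono ρ ∧ ∀ n, ρ n ∈ S := by
  classical
  have hfold : ∀ M : List ℕ, ∀ m ∈ M, m ≤ M.foldr max 0 := by
    intro M
    induction M with
    | nil => intro m hm; simp at hm
    | cons a M ih =>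
      intro m hm
      rcases List.mem_cons.1 hm with rfl | hm
      · exact le_max_left _ _
      · exact le_trans (ih m hm) (le_max_right _ _)
  have hstep : ∀ M : List ℕ, ∃ i ∈ S, ∀ m ∈ M, m < i := by
    intro M
    obtain ⟨i, hiS, hi⟩ := hS.exists_gt (M.foldr max 0)
    exact ⟨i, hiS, fun m hm => lt_of_le_of_lt (hfold M m hm) hi⟩
  let next : List ℕ → ℕ := fun M => Classical.choose (hstep M)
  refine ⟨seqRec next, strictMono_nat_of_lt_succ fun n => ?_, fun n =>
    (Classical.choose_spec (hstep (hist next n))).1⟩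
  have hspec := Classical.choose_spec (hstep (hist next (n + 1)))
  exact hspec.2 _ (seqRec_mem_hist next (Nat.lt_succ_self n))

/-- Step 2: Ramsey-type selection.  From the greedy sequence, select a strictly monotone
subsequence on which the "above-diagonal" behaviour is uniform: either always agreement
with `h`, or always disagreement. -/
theorem select (h : X → Bool) (G : ℕ → X → Bool) (z : ℕ → X) :
    ∃ σ : ℕ → ℕ, StrictMono σ ∧
      ((∀ m n, m < n → G (σ m) (z (σ n)) = h (z (σ n))) ∨
       (∀ m n, m < n → G (σ m) (z (σ n)) ≠ h (z (σ n)))) := by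
  classical
  set V : Ultrafilter ℕ := hyperfilter ℕ with hVdef
  set B : ℕ → Prop := fun j => {i : ℕ | G j (z i) = h (z i)} ∈ V with hB
  have hcol : ∀ j, {i : ℕ | (G j (z i) = h (z i)) ↔ B j} ∈ V := by
    intro j
    by_cases hb : B j
    · refine mem_of_superset hb ?_
      intro i hi
      simp only [Set.mem_setOf_eq] at hi ⊢
      exact ⟨fun _ => hb, fun _ => hi⟩
    · have h2 := (Ultrafilter.compl_mem_iff_notMem (f := V)).2 hb
      refine mem_of_superset h2 ?_
      intro i hi
      simp only [Set.mem_compl_iff, Set.mem_setOf_eq] at hi ⊢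
      exact ⟨fun hx => absurd hx hi, fun hx => absurd hx hb⟩
  have hstep : ∀ M : List ℕ, ∃ i : ℕ,
      (∀ m ∈ M, m < i) ∧ ∀ m ∈ M, ((G m (z i) = h (z i)) ↔ B m) := by
    intro M
    have hmem : {i : ℕ | (∀ m ∈ M, m < i) ∧ ∀ m ∈ M, ((G m (z i) = h (z i)) ↔ B m)} ∈ V := by
      induction M with
      | nil =>
        refine mem_of_superset Filter.univ_mem ?_
        intro g _
        simp
      | cons a M ih =>
        have h1 : {i : ℕ | a < i} ∈ V := by
          refine mem_hyperfilter_of_finite_compl ?_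
          refine Set.Finite.subset (Set.finite_le_nat a) ?_
          intro i hi
          simp only [Set.mem_compl_iff, Set.mem_setOf_eq, not_lt] at hi
          exact hi
        have h3 := inter_mem h1 (inter_mem (hcol a) ih)
        refine mem_of_superset h3 ?_
        rintro i ⟨hi1, hi2, hi3, hi4⟩
        refine ⟨fun m hm => ?_, fun m hm => ?_⟩ <;> rcases List.mem_cons.1 hm with rfl | hm
        · exact hi1
        · exact hi3 m hm
        · exact hi2
        · exact hi4 m hm
    obtain ⟨i, hi⟩ := Filter.nonempty_of_mem (f := (V : Filter ℕ)) hmem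
    exact ⟨i, hi.1, hi.2⟩
  let next : List ℕ → ℕ := fun M => Classical.choose (hstep M)
  let t : ℕ → ℕ := seqRec next
  have ht_mono : StrictMono t := by
    refine strictMono_nat_of_lt_succ fun n => ?_
    have hspec := Classical.choose_spec (hstep (hist next (n + 1)))
    exact hspec.1 _ (seqRec_mem_hist next (Nat.lt_succ_self n))
  have ht_col : ∀ m n, m < n → ((G (t m) (z (t n)) = h (z (t n))) ↔ B (t m)) := by
    intro m n hmn
    have hspec := Classical.choose_spec (hstep (hist next n))
    exact hspec.2 _ (seqRec_mem_hist next hmn)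
  have hEor : {n | B (t n)}.Infinite ∨ {n | B (t n)}ᶜ.Infinite := by
    by_contra hc
    push_neg at hc
    have := hc.1.union hc.2
    rw [Set.union_compl_self] at this
    exact Set.infinite_univ this
  rcases hEor with hE | hE
  · obtain ⟨ρ, hρ, hρS⟩ := mono_into hE
    refine ⟨t ∘ ρ, ht_mono.comp hρ, Or.inl fun m n hmn => ?_⟩
    exact (ht_col (ρ m) (ρ n) (hρ hmn)).2 (hρS m)
  · obtain ⟨ρ, hρ, hρS⟩ := mono_into hE
    refine ⟨t ∘ ρ, ht_mono.comp hρ, Or.inr fun m n hmn hx => ?_⟩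
    exact hρS m ((ht_col (ρ m) (ρ n) (hρ hmn)).1 hx)

/-- Step 3: an infinite threshold sequence yields shattered mistake trees of every depth,
via binary search. -/
theorem tree_of_threshold {H : Set (X → Bool)} (u : ℕ → X) (c : ℕ → Bool) (f : ℕ → X → Bool)
    (hfH : ∀ j, f j ∈ H)
    (ht : ∀ j m, f j (u m) = if m < j then c m else !(c m)) (d : ℕ) :
    ∃ t : List Bool → X, ∀ b : Fin d → Bool, ∃ h ∈ H,
      ∀ i : Fin d, h (t ((List.ofFn b).take i)) = b i := by
  classical
  set stepf : ℕ × ℕ → Bool → ℕ × ℕ := fun p β =>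
    (if c (p.1 + 2 ^ (p.2 - 1)) = β then p.1 + 2 ^ (p.2 - 1) else p.1, p.2 - 1) with hstepf
  set st : List Bool → ℕ × ℕ := fun L => L.foldl stepf (0, d) with hst
  refine ⟨fun L => u ((st L).1 + 2 ^ ((st L).2 - 1)), ?_⟩
  intro b
  set A : ℕ → ℕ × ℕ := fun i => st ((List.ofFn b).take i) with hA
  have hA0 : A 0 = (0, d) := by simp [hA, hst]
  have hAsucc : ∀ i (hi : i < d), A (i + 1) = stepf (A i) (b ⟨i, hi⟩) := by
    intro i hi
    have h1 : (List.ofFn b).take (i + 1) = (List.ofFn b).take i ++ [b ⟨i, hi⟩] := by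
      rw [List.take_succ]
      congr 1
      have h2 : (List.ofFn b)[i]? = some (b ⟨i, hi⟩) := by
        rw [List.getElem?_eq_getElem (by simpa using hi)]
        simp
      rw [h2]
      rfl
    simp [hA, hst, h1, List.foldl_append]
  have hsnd : ∀ i, i ≤ d → (A i).2 = d - i := by
    intro i
    induction i with
    | zero => intro _; simp [hA0]
    | succ i ih =>
      intro hi
      rw [hAsucc i (by omega)]
      have h2 : (A i).2 = d - i := ih (by omega)
      simp only [hstepf, h2]
      omega
  have key : ∀ i, i < d → (A i).1 ≤ (A (i + 1)).1 ∧
      (A (i + 1)).1 + 2 ^ (d - (i + 1)) ≤ (A i).1 + 2 ^ (d - i) := by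
    intro i hi
    rw [hAsucc i hi]
    have h2 : (A i).2 = d - i := hsnd i (le_of_lt hi)
    have he : d - i - 1 = d - (i + 1) := by omega
    have hp : 2 ^ (d - (i + 1)) + 2 ^ (d - (i + 1)) = 2 ^ (d - i) := by
      have h3 : d - i = (d - (i + 1)) + 1 := by omega
      rw [h3, pow_succ]
      ring
    simp only [hstepf, h2, he]
    refine ⟨?_, ?_⟩ <;> split
    · exact Nat.le_add_right _ _
    · exact le_rfl
    · rw [add_assoc, hp]
    · exact Nat.add_le_add_left (le_trans (Nat.le_add_left _ _) (le_of_eq hp)) _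
  have chain : ∀ n i, i + n = d → (A i).1 ≤ (A d).1 ∧ (A d).1 + 1 ≤ (A i).1 + 2 ^ (d - i) := by
    intro n
    induction n with
    | zero =>
      intro i hi
      have hid : i = d := by omega
      subst hid
      exact ⟨le_rfl, by simp⟩
    | succ n ih =>
      intro i hi
      have hk := key i (by omega)
      have hc := ih (i + 1) (by omega)
      exact ⟨le_trans hk.1 hc.1, le_trans hc.2 hk.2⟩
  refine ⟨f ((A d).1 + 1), hfH _, ?_⟩
  intro i
  have hi : (i : ℕ) < d := i.2
  have hnode : (A (i : ℕ)).2 - 1 = d - (i : ℕ) - 1 := by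
    rw [hsnd (i : ℕ) (le_of_lt hi)]
  show f ((A d).1 + 1) (u ((A (i : ℕ)).1 + 2 ^ ((A (i : ℕ)).2 - 1))) = b i
  rw [hnode]
  have hsucc := hAsucc (i : ℕ) hi
  rw [Fin.eta] at hsucc
  have h2 : (A (i : ℕ)).2 = d - (i : ℕ) := hsnd (i : ℕ) (le_of_lt hi)
  have he : d - (i : ℕ) - 1 = d - ((i : ℕ) + 1) := by omega
  by_cases hcase : c ((A (i : ℕ)).1 + 2 ^ (d - (i : ℕ) - 1)) = b i
  · have hA1 : (A ((i : ℕ) + 1)).1 = (A (i : ℕ)).1 + 2 ^ (d - (i : ℕ) - 1) := by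
      have h4 : (A (i : ℕ)).2 - 1 = d - (i : ℕ) - 1 := by omega
      rw [hsucc]
      simp [hstepf, h4, hcase]
    have hlt : (A (i : ℕ)).1 + 2 ^ (d - (i : ℕ) - 1) < (A d).1 + 1 := by
      have h3 := (chain (d - ((i : ℕ) + 1)) ((i : ℕ) + 1) (by omega)).1
      omega
    rw [ht, if_pos hlt]
    exact hcase
  · have hA1 : (A ((i : ℕ) + 1)).1 = (A (i : ℕ)).1 := by
      have h4 : (A (i : ℕ)).2 - 1 = d - (i : ℕ) - 1 := by omega
      rw [hsucc]
      simp [hstepf, h4, hcase]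
    have hge : ¬ ((A (i : ℕ)).1 + 2 ^ (d - (i : ℕ) - 1) < (A d).1 + 1) := by
      have h3 := (chain (d - ((i : ℕ) + 1)) ((i : ℕ) + 1) (by omega)).2
      rw [← he] at h3
      omega
    rw [ht, if_neg hge]
    have hb := bool_ne_iff (Ne.symm hcase)
    rw [hb]

end StarEluderAux

/-- Any infinite concept class `H` has either an infinite star-eluder sequence
(centered at some classifier) or infinite Littlestone dimension (for every depth `d` there is
a complete binary mistake tree of depth `d` shattered by `H`). -/
theorem infinite_star_eluder_or_infinite_littlestone {X : Type*} (H : Set (X → Bool))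
    (hH : H.Infinite) :
    (∃ (h : X → Bool) (x : ℕ → X) (y : ℕ → Bool),
      (∀ n : ℕ, ∃ g ∈ H, ∀ i < n, g (x i) = y i) ∧
      (∀ k : ℕ, 1 ≤ k →
        (Function.Injective fun i : Fin k => x (nIdx k + i)) ∧
        ∀ i : Fin k, ∃ g ∈ H, (∀ m < nIdx k, g (x m) = y m) ∧
          g (x (nIdx k + i)) ≠ h (x (nIdx k + i)) ∧
          ∀ j : Fin k, j ≠ i → g (x (nIdx k + j)) = h (x (nIdx k + j)))) ∨
    (∀ d : ℕ, ∃ t : List Bool → X, ∀ b : Fin d → Bool, ∃ h ∈ H,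
      ∀ i : Fin d, h (t ((List.ofFn b).take i)) = b i) := by
  classical
  obtain ⟨h, G, z, hGH, P1, P2⟩ := StarEluderAux.greedy hH
  obtain ⟨σ, hσ, hcase⟩ := StarEluderAux.select h G z
  have hzinj : Function.Injective z := by
    intro a b hab
    by_contra hne
    rcases Ne.lt_or_gt hne with hl | hl
    · have h1 := P1 b a hl
      rw [hab] at h1
      exact P2 b h1
    · have h1 := P1 a b hl
      rw [← hab] at h1
      exact P2 a h1
  rcases hcase with hagree | hdis
  · left
    refine ⟨h, fun m => z (σ m), fun m => h (z (σ m)), ?_, ?_⟩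
    · intro n
      exact ⟨G (σ n), hGH _, fun i hi => P1 _ _ (hσ hi)⟩
    · intro k hk
      constructor
      · intro i j hij
        have h1 : z (σ (nIdx k + (i : ℕ))) = z (σ (nIdx k + (j : ℕ))) := hij
        have h2 := hσ.injective (hzinj h1)
        exact Fin.ext (by omega)
      · intro i
        refine ⟨G (σ (nIdx k + (i : ℕ))), hGH _, ?_, ?_, ?_⟩
        · intro m hm
          exact P1 _ _ (hσ (by omega))
        · exact P2 (σ (nIdx k + (i : ℕ)))
        · intro j hji
          rcases Nat.lt_or_ge (j : ℕ) (i : ℕ) with hl | hge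
          · exact P1 _ _ (hσ (by omega))
          · have hlt : (i : ℕ) < (j : ℕ) := by
              rcases Nat.eq_or_lt_of_le hge with heq | hlt
              · exact absurd (Fin.ext heq.symm) hji
              · exact hlt
            exact hagree (nIdx k + (i : ℕ)) (nIdx k + (j : ℕ)) (by omega)
  · right
    intro d
    refine StarEluderAux.tree_of_threshold (fun m => z (σ m)) (fun m => h (z (σ m)))
      (fun j : ℕ => G (σ j)) (fun j => hGH _) ?_ d
    intro j m
    rcases Nat.lt_trichotomy m j with hl | heq | hl
    · rw [if_pos hl]
      exact P1 _ _ (hσ hl)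
    · subst heq
      rw [if_neg (lt_irrefl _)]
      exact StarEluderAux.bool_ne_iff (P2 (σ m))
    · rw [if_neg (by omega)]
      exact StarEluderAux.bool_ne_iff (hdis j m hl)
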